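/- If λ is a partition that is simultaneously a t-core and a (t+1)-core for t ≥ 2, then every element x of β(λ) satisfies (k-1)(t+1)+1 ≤ x ≤ kt-1 for some k with 1 ≤ k ≤ t-1; equivalently, β(λ) contains no number of the form at + b(t+1) with a, b ≥ 0 nonnegative integers. -/

import Mathlib

/-- The β-set of a partition given as a list (λ_1, ..., λ_ℓ):
the set {λ_i + ℓ - i : 1 ≤ i ≤ ℓ} of first-column hook lengths. -/
def betaSet (l : List ℕ) : Finset ℕ :=
  Finset.image (fun i => l.getD i 0 + (l.length - 1 - i)) (Finset.range l.length)

/-- A partition is an s-core iff for every x in its β-set with x ≥ s, also x - s is in the β-set. -/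
def IsCoreBeta (l : List ℕ) (s : ℕ) : Prop :=
  ∀ x ∈ betaSet l, s ≤ x → x - s ∈ betaSet l

lemma zero_not_mem_betaSet (l : List ℕ) (hpos : ∀ p ∈ l, 0 < p) :
    0 ∉ betaSet l := by
  intro h
  simp only [betaSet, Finset.mem_image, Finset.mem_range] at h
  obtain ⟨i, hi, hzero⟩ := h
  have h1 : l.getD i 0 = l[i]'hi := List.getD_eq_getElem l 0 hi
  have h2 : 0 < l[i]'hi := hpos _ (List.getElem_mem hi)
  omega

lemma not_rep (t : ℕ) (ht : 2 ≤ t) (l : List ℕ) (hpos : ∀ p ∈ l, 0 < p)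
    (hcore1 : IsCoreBeta l t) (hcore2 : IsCoreBeta l (t + 1)) :
    ∀ x, x ∈ betaSet l → ∀ a b : ℕ, x ≠ a * t + b * (t + 1) := by
  intro x
  induction x using Nat.strong_induction_on with
  | _ x ih =>
    intro hx a b hab
    rcases Nat.eq_zero_or_pos a with ha | ha
    · rcases Nat.eq_zero_or_pos b with hb | hb
      · subst ha; subst hb
        simp at hab
        exact zero_not_mem_betaSet l hpos (hab ▸ hx)
      · -- b ≥ 1, so x ≥ t+1
        have hxt : t + 1 ≤ x := by nlinarith
        have hmem := hcore2 x hx hxt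
        have hlt : x - (t + 1) < x := by omega
        refine ih _ hlt hmem a (b - 1) ?_
        have : b * (t + 1) = (b - 1) * (t + 1) + (t + 1) := by
          cases b with
          | zero => omega
          | succ n => rw [Nat.succ_sub_one, Nat.succ_mul]
        omega
    · -- a ≥ 1, so x ≥ t
      have hxt : t ≤ x := by nlinarith
      have hmem := hcore1 x hx hxt
      have hlt : x - t < x := by omega
      refine ih _ hlt hmem (a - 1) b ?_
      have : a * t = (a - 1) * t + t := by
        cases a with
        | zero => omega
        | succ n => rw [Nat.succ_sub_one, Nat.succ_mul]
      omega

/-- If λ is a (t, t+1)-core partition, then every element x of its β-set satisfies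
(k-1)(t+1)+1 ≤ x ≤ kt-1 for some 1 ≤ k ≤ t-1. -/
theorem beta_structure (t : ℕ) (ht : 2 ≤ t) (l : List ℕ)
    (hsort : l.Pairwise (· ≥ ·)) (hpos : ∀ p ∈ l, 0 < p)
    (hcore1 : IsCoreBeta l t) (hcore2 : IsCoreBeta l (t + 1)) :
    ∀ x ∈ betaSet l, ∃ k, 1 ≤ k ∧ k ≤ t - 1 ∧ (k - 1) * (t + 1) + 1 ≤ x ∧ x ≤ k * t - 1 := by
  intro x hx
  have hnr := not_rep t ht l hpos hcore1 hcore2 x hx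
  obtain ⟨d, r, hdm, hrt⟩ : ∃ d r, d * t + r = x ∧ r < t :=
    ⟨x / t, x % t, by rw [Nat.mul_comm]; exact Nat.div_add_mod x t,
      Nat.mod_lt x (by omega)⟩
  have hdr : d < r := by
    by_contra hcon
    push_neg at hcon
    exact hnr (d - r) r (by
      have : (d - r) * t + r * (t + 1) = d * t + r := by
        have h1 : (d - r) * t = d * t - r * t := by
          rw [Nat.sub_mul]
        have h2 : r * t ≤ d * t := Nat.mul_le_mul_right t hcon
        have h3 : r * (t + 1) = r * t + r := by ring
        omega
      omega)
  refine ⟨d + 1, by omega, by omega, ?_, ?_⟩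
  · have : (d + 1 - 1) * (t + 1) = d * t + d := by rw [Nat.add_sub_cancel]; ring
    omega
  · have : (d + 1) * t = d * t + t := by ring
    omega
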